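/- Let (X, 𝔅, μ) be a standard Borel probability space and let P be a finite measurable partition of X which is μ-roughly equal with parameters α > 0, n ∈ ℕ, h > 0. Then for every β > 0 there exists γ > 0 such that for every sub-σ-algebra 𝔉 ⊆ 𝔅 with H_μ(P|𝔉) > H_μ(P) − γ, there is a measurable set Z ⊆ X with μ(Z) ≥ 1 − β on which the disintegration measures μ_z of μ over 𝔉 satisfy: P is μ_z-roughly equal with parameters α, n, h, and the good atoms can be taken the same for all z ∈ Z, namely every μ-good atom Pᵢ of P satisfies 2^{−n(h+α)} < μ_z(Pᵢ) < 2^{−n(h−α)} and the total μ_z-measure of the μ-good atoms exceeds 1 − α. -/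

import Mathlib

open MeasureTheory ProbabilityTheory
open scoped ENNReal

/-- `P` is a finite measurable partition of `X` (indexed by a finite index type). -/
structure IsPartition {X : Type*} [mX : MeasurableSpace X] {ι : Type*} (P : ι → Set X) :
    Prop where
  meas : ∀ i, MeasurableSet (P i)
  disj : Pairwise (Function.onFun Disjoint P)
  cover : ⋃ i, P i = Set.univ

/-- The Shannon entropy (base 2) of the probability vector of a finite partition `P`
with respect to `μ`. -/
noncomputable def entropyH {X : Type*} [mX : MeasurableSpace X] {ι : Type*} [Fintype ι]
    (μ : Measure X) (P : ι → Set X) : ℝ :=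
  - ∑ i, (μ (P i)).toReal * Real.logb 2 (μ (P i)).toReal

/-- The atom `P i` is a good atom of `P` for the measure `ν` (with parameters `ε, n, h`):
its measure lies strictly between `2 ^ (-n (h + ε))` and `2 ^ (-n (h - ε))`. -/
def GoodAtom {X : Type*} [mX : MeasurableSpace X] {ι : Type*}
    (ν : Measure X) (P : ι → Set X) (ε : ℝ) (n : ℕ) (h : ℝ) (i : ι) : Prop :=
  (2 : ℝ) ^ (-(n : ℝ) * (h + ε)) < (ν (P i)).toReal ∧
    (ν (P i)).toReal < (2 : ℝ) ^ (-(n : ℝ) * (h - ε))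

open scoped Classical in
/-- The partition `P` is `ν`-roughly equal with parameters `ε, n, h`: the good atoms carry
total measure greater than `1 - ε`. -/
noncomputable def RoughlyEqual {X : Type*} [mX : MeasurableSpace X] {ι : Type*} [Fintype ι]
    (ν : Measure X) (P : ι → Set X) (ε : ℝ) (n : ℕ) (h : ℝ) : Prop :=
  1 - ε < ∑ i ∈ Finset.univ.filter (GoodAtom ν P ε n h), (ν (P i)).toReal

open scoped Classical in
/-- `P` is `ν`-roughly equal with parameters `α, n, h`, with the same good atoms as for `μ`:
every `μ`-good atom is also `ν`-good, and the `μ`-good atoms carry `ν`-measure more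
than `1 - α`. -/
noncomputable def RoughlyEqualSameGood {X : Type*} [mX : MeasurableSpace X] {ι : Type*}
    [Fintype ι] (μ ν : Measure X) (P : ι → Set X) (α : ℝ) (n : ℕ) (h : ℝ) : Prop :=
  RoughlyEqual ν P α n h ∧
  (∀ i, GoodAtom μ P α n h i → GoodAtom ν P α n h i) ∧
  1 - α < ∑ i ∈ Finset.univ.filter (GoodAtom μ P α n h), (ν (P i)).toReal

/-- The conditional entropy `H_μ(P | 𝔉) = ∑_{A ∈ P} ∫ φ(μ[1_A | 𝔉]) dμ` of a finite
partition `P` given a σ-algebra `F`, where `φ(t) = -t log₂ t`. -/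
noncomputable def condEntropyAlg {X : Type*} [mX : MeasurableSpace X] (μ : Measure X)
    (F : MeasurableSpace X) {ι : Type*} [Fintype ι] (P : ι → Set X) : ℝ :=
  ∑ i, ∫ x, -((μ[(P i).indicator (fun _ => (1 : ℝ)) | F]) x *
      Real.logb 2 ((μ[(P i).indicator (fun _ => (1 : ℝ)) | F]) x)) ∂μ


private lemma abs_mul_log_le {t : ℝ} (h0 : 0 ≤ t) (h1 : t ≤ 1) : |t * Real.log t| ≤ 1 := by
  rcases eq_or_lt_of_le h0 with h | h
  · simp [← h]
  · have hlog : 1 - t⁻¹ ≤ Real.log t := Real.one_sub_inv_le_log_of_pos h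
    have hlog' : Real.log t ≤ t - 1 := Real.log_le_sub_one_of_pos h
    have h2 : t * (1 - t⁻¹) ≤ t * Real.log t := by nlinarith
    have h3 : t * (1 - t⁻¹) = t - 1 := by field_simp
    have h4 : t * Real.log t ≤ 0 := by nlinarith
    rw [abs_of_nonpos h4]
    nlinarith

private lemma key_ineq {p t : ℝ} (hp0 : 0 < p) (hp1 : p ≤ 1) (ht0 : 0 ≤ t) (ht1 : t ≤ 1) :
    t * Real.log p + (t - p) + (t - p) ^ 2 / 2 ≤ t * Real.log t := by
  rcases eq_or_lt_of_le ht0 with h | ht0'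
  · rw [← h]; simp; nlinarith
  set G : ℝ → ℝ := fun x => x * Real.log x - x * Real.log p - (x - p) - (x - p) ^ 2 / 2 with hG
  have hasder : ∀ x : ℝ, 0 < x → HasDerivAt G (Real.log x - Real.log p - (x - p)) x := by
    intro x hx
    have h1 := Real.hasDerivAt_mul_log (ne_of_gt hx)
    have h2 : HasDerivAt (fun y : ℝ => y * Real.log p) (Real.log p) x := by
      simpa using (hasDerivAt_id x).mul_const (Real.log p)
    have h3 : HasDerivAt (fun y : ℝ => y - p) 1 x := (hasDerivAt_id x).sub_const p
    have h4 : HasDerivAt (fun y : ℝ => (y - p) ^ 2 / 2) (x - p) x := by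
      have h5 := (h3.pow 2).div_const 2
      refine h5.congr_deriv ?_
      norm_num
    have h6 := ((h1.sub h2).sub h3).sub h4
    refine h6.congr_deriv ?_
    ring
  have hGp : G p = 0 := by simp [hG]
  have key : 0 ≤ G t := by
    rcases le_total p t with hpt | hpt
    · have mono : MonotoneOn G (Set.Icc p 1) := by
        apply monotoneOn_of_deriv_nonneg (convex_Icc p 1)
        · intro x hx
          exact (hasder x (lt_of_lt_of_le hp0 hx.1)).continuousAt.continuousWithinAt
        · intro x hx
          rw [interior_Icc] at hx
          exact (hasder x (hp0.trans hx.1)).differentiableAt.differentiableWithinAt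
        · intro x hx
          rw [interior_Icc] at hx
          rw [(hasder x (hp0.trans hx.1)).deriv]
          have hx0 : 0 < x := hp0.trans hx.1
          have hlog : 1 - (x / p)⁻¹ ≤ Real.log (x / p) :=
            Real.one_sub_inv_le_log_of_pos (div_pos hx0 hp0)
          rw [Real.log_div (ne_of_gt hx0) (ne_of_gt hp0), inv_div] at hlog
          have hdiv : p / x ≤ 1 - (x - p) := by
            rw [div_le_iff₀ hx0]; nlinarith [hx.1.le, hx.2.le]
          linarith
      have := mono (Set.mem_Icc.2 ⟨le_refl p, hp1⟩) (Set.mem_Icc.2 ⟨hpt, ht1⟩) hpt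
      linarith [hGp ▸ this]
    · have anti : AntitoneOn G (Set.Icc t p) := by
        apply antitoneOn_of_deriv_nonpos (convex_Icc t p)
        · intro x hx
          exact (hasder x (lt_of_lt_of_le ht0' hx.1)).continuousAt.continuousWithinAt
        · intro x hx
          rw [interior_Icc] at hx
          exact (hasder x (ht0'.trans hx.1)).differentiableAt.differentiableWithinAt
        · intro x hx
          rw [interior_Icc] at hx
          have hx0 : 0 < x := ht0'.trans hx.1
          rw [(hasder x hx0).deriv]
          have hlog : Real.log (x / p) ≤ x / p - 1 :=
            Real.log_le_sub_one_of_pos (div_pos hx0 hp0)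
          rw [Real.log_div (ne_of_gt hx0) (ne_of_gt hp0)] at hlog
          have hdiv : x / p - 1 ≤ x - p := by
            rw [sub_le_iff_le_add, div_le_iff₀ hp0]; nlinarith [hx.2.le]
          linarith
      have := anti (Set.mem_Icc.2 ⟨le_refl t, hpt⟩) (Set.mem_Icc.2 ⟨hpt, le_refl p⟩) hpt
      linarith [hGp ▸ this]
  simp only [hG] at key
  linarith

private lemma indicator_one_integrable {X : Type*} (mX : MeasurableSpace X) (μ : Measure X)
    [IsProbabilityMeasure μ] {s : Set X} (hs : MeasurableSet s) :
    Integrable (s.indicator fun _ => (1 : ℝ)) μ :=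
  (integrable_const 1).indicator hs

private lemma myIntegralIndicatorOne {X : Type*} (mX : MeasurableSpace X) (μ : Measure X)
    [IsProbabilityMeasure μ] {s : Set X} (hs : MeasurableSet s) :
    ∫ x, s.indicator (fun _ => (1 : ℝ)) x ∂μ = (μ s).toReal := by
  rw [integral_indicator_const (1 : ℝ) hs]
  simp [measureReal_def]

private lemma atom_gap {X : Type*} [mX : MeasurableSpace X] (μ : Measure X)
    [IsProbabilityMeasure μ] (F : MeasurableSpace X) (hF : F ≤ mX) {s : Set X}
    (hs : MeasurableSet[mX] s) :
    ∫ x, ((μ[s.indicator (fun _ => (1 : ℝ)) | F]) x - (μ s).toReal) ^ 2 ∂μ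
      ≤ 2 * Real.log 2 *
        ((-((μ s).toReal * Real.logb 2 (μ s).toReal)) -
          ∫ x, -((μ[s.indicator (fun _ => (1 : ℝ)) | F]) x *
            Real.logb 2 ((μ[s.indicator (fun _ => (1 : ℝ)) | F]) x)) ∂μ) := by
  set f := μ[s.indicator (fun _ => (1 : ℝ)) | F] with hf_def
  set p : ℝ := (μ s).toReal with hp_def
  have hind_int : Integrable (s.indicator fun _ => (1 : ℝ)) μ :=
    indicator_one_integrable mX μ hs
  have hf_int : Integrable f μ := integrable_condExp
  have hp0 : 0 ≤ p := ENNReal.toReal_nonneg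
  have hp1 : p ≤ 1 := by
    have h := prob_le_one (μ := μ) (s := s)
    simpa [hp_def] using ENNReal.toReal_mono ENNReal.one_ne_top h
  have hf_meas : Measurable[mX] f :=
    ((stronglyMeasurable_condExp (m := F)).mono hF).measurable
  have hf0 : 0 ≤ᵐ[μ] f :=
    condExp_nonneg (Filter.Eventually.of_forall fun x =>
      Set.indicator_nonneg (fun _ _ => zero_le_one) x)
  have hf1 : f ≤ᵐ[μ] fun _ => (1 : ℝ) := by
    have h := condExp_mono (m := F) hind_int (integrable_const (1 : ℝ))
      (Filter.Eventually.of_forall fun x => by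
        by_cases hx : x ∈ s <;> simp [Set.indicator_of_mem, Set.indicator_of_notMem, hx])
    rwa [condExp_const hF (1 : ℝ)] at h
  have hf01 : ∀ᵐ x ∂μ, 0 ≤ f x ∧ f x ≤ 1 := hf0.and hf1
  have hint_f : ∫ x, f x ∂μ = p := by
    rw [hf_def, integral_condExp hF, myIntegralIndicatorOne mX μ hs]
  have hsq_meas : Measurable[mX] fun x => (f x - p) ^ 2 := (hf_meas.sub_const p).pow_const 2
  have hsq_int : Integrable (fun x => (f x - p) ^ 2) μ := by
    refine Integrable.mono' (integrable_const 1)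
      (hsq_meas.aestronglyMeasurable (μ := μ)) ?_
    filter_upwards [hf01] with x ⟨h0, h1⟩
    rw [Real.norm_eq_abs, abs_of_nonneg (sq_nonneg _)]
    nlinarith
  have hflog_meas : Measurable[mX] fun x => f x * Real.log (f x) :=
    hf_meas.mul (Real.measurable_log.comp hf_meas)
  have hflog_int : Integrable (fun x => f x * Real.log (f x)) μ := by
    refine Integrable.mono' (integrable_const 1)
      (hflog_meas.aestronglyMeasurable (μ := μ)) ?_
    filter_upwards [hf01] with x ⟨h0, h1⟩
    rw [Real.norm_eq_abs]
    exact abs_mul_log_le h0 h1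
  rcases eq_or_lt_of_le hp0 with hp | hp
  · -- p = 0 case
    have hμs : μ s = 0 := by
      rcases (ENNReal.toReal_eq_zero_iff _).1 hp.symm with h | h
      · exact h
      · exact absurd h (measure_ne_top μ s)
    have hnm : ∀ᵐ x ∂μ, x ∉ s := by
      rw [ae_iff]
      simpa [Set.setOf_mem_eq] using hμs
    have hind0 : s.indicator (fun _ => (1 : ℝ)) =ᵐ[μ] 0 := by
      filter_upwards [hnm] with x hx
      simp [Set.indicator_of_notMem hx]
    have hf_eq0 : f =ᵐ[μ] 0 := by
      have h := condExp_congr_ae (m := F) hind0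
      rwa [condExp_zero] at h
    have h1 : ∫ x, (f x - p) ^ 2 ∂μ = 0 := by
      rw [← integral_zero X ℝ (μ := μ)]
      apply integral_congr_ae
      filter_upwards [hf_eq0] with x hx
      simp [hx, ← hp]
    have h2 : ∫ x, -(f x * Real.logb 2 (f x)) ∂μ = 0 := by
      rw [← integral_zero X ℝ (μ := μ)]
      apply integral_congr_ae
      filter_upwards [hf_eq0] with x hx
      simp [hx]
    rw [h1, h2, ← hp]
    simp
  · -- p > 0 case
    have hlogb : ∀ y : ℝ, Real.logb 2 y = Real.log y / Real.log 2 := fun y => rfl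
    have hlog2 : (0 : ℝ) < Real.log 2 := Real.log_pos (by norm_num)
    have e1 : Integrable (fun x => f x * Real.log p) μ := hf_int.mul_const _
    have e2 : Integrable (fun x => f x - p) μ := by
      exact hf_int.sub (integrable_const p)
    have e3 : Integrable (fun x => (f x - p) ^ 2 / 2) μ := hsq_int.div_const 2
    have hmono : ∫ x, (f x * Real.log p + (f x - p) + (f x - p) ^ 2 / 2) ∂μ
        ≤ ∫ x, f x * Real.log (f x) ∂μ := by
      refine integral_mono_ae ?_ hflog_int ?_
      · exact (e1.add e2).add e3
      filter_upwards [hf01] with x ⟨h0, h1⟩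
      exact key_ineq hp hp1 h0 h1
    have e12 : Integrable (fun x => f x * Real.log p + (f x - p)) μ := by
      exact e1.add e2
    have hLHS : ∫ x, (f x * Real.log p + (f x - p) + (f x - p) ^ 2 / 2) ∂μ
        = p * Real.log p + (∫ x, (f x - p) ^ 2 ∂μ) / 2 := by
      rw [integral_add e12 e3, integral_add e1 e2,
        integral_mul_const, integral_sub hf_int (integrable_const p), integral_const,
        integral_div, hint_f]
      simp
    have hRHS : ∫ x, -(f x * Real.logb 2 (f x)) ∂μ
        = -(∫ x, f x * Real.log (f x) ∂μ) / Real.log 2 := by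
      have h : (fun x => -(f x * Real.logb 2 (f x)))
          = fun x => (-(f x * Real.log (f x))) / Real.log 2 := by
        ext x; rw [hlogb]; ring
      rw [h, integral_div, integral_neg]
    rw [hRHS, hlogb]
    have goal2 : ∫ x, (f x - p) ^ 2 ∂μ
        ≤ 2 * ((∫ x, f x * Real.log (f x) ∂μ) - p * Real.log p) := by
      rw [hLHS] at hmono
      linarith
    have hfield : 2 * Real.log 2 * (-(p * (Real.log p / Real.log 2)) -
        -(∫ x, f x * Real.log (f x) ∂μ) / Real.log 2)
        = 2 * ((∫ x, f x * Real.log (f x) ∂μ) - p * Real.log p) := by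
      field_simp
      ring
    rw [hfield]
    exact goal2

set_option maxHeartbeats 1000000 in
private lemma main_helper {X : Type*} [mX : MeasurableSpace X]
    [StandardBorelSpace X] (μ : Measure X) [IsProbabilityMeasure μ]
    {l : ℕ} (P : Fin l → Set X) (hmeas : ∀ i, MeasurableSet[mX] (P i))
    (α h : ℝ) (n : ℕ) (hα : 0 < α) (hh : 0 < h)
    (hP : RoughlyEqual μ P α n h)
    (β : ℝ) (hβ : 0 < β) :
    ∃ γ : ℝ, 0 < γ ∧ ∀ FF : {m : MeasurableSpace X // m ≤ mX},
      condEntropyAlg (mX := mX) μ FF.1 P > entropyH (mX := mX) μ P - γ →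
      ∃ Z : Set X, MeasurableSet[mX] Z ∧ ENNReal.ofReal (1 - β) ≤ μ Z ∧
        ∀ z ∈ Z, RoughlyEqualSameGood (mX := mX) μ
          (condExpKernel (mΩ := mX) μ FF.1 z) P α n h := by
  classical
  set p : Fin l → ℝ := fun i => (μ (P i)).toReal with hp_def
  set Gs : Finset (Fin l) := Finset.univ.filter (GoodAtom μ P α n h) with hGs_def
  have hP' : 1 - α < ∑ i ∈ Gs, p i := hP
  rcases Finset.eq_empty_or_nonempty Gs with hGe | hGne
  · -- no good atoms: then 1 - α < 0 and everything is trivial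
    have hα1 : 1 - α < 0 := by
      rw [hGe] at hP'; simpa using hP'
    refine ⟨1, one_pos, fun FF _ => ⟨Set.univ, MeasurableSet.univ, ?_, ?_⟩⟩
    · simp only [measure_univ]
      exact ENNReal.ofReal_le_one.2 (by linarith)
    · intro z _
      refine ⟨?_, ?_, ?_⟩
      · show 1 - α < _
        refine lt_of_lt_of_le hα1 ?_
        exact Finset.sum_nonneg fun i _ => ENNReal.toReal_nonneg
      · intro i hi
        exfalso
        have : i ∈ Gs := Finset.mem_filter.2 ⟨Finset.mem_univ i, hi⟩
        rw [hGe] at this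
        simp at this
      · show 1 - α < _
        refine lt_of_lt_of_le hα1 ?_
        exact Finset.sum_nonneg fun i _ => ENNReal.toReal_nonneg
  · -- main case
    have hgoodGs : ∀ i ∈ Gs, GoodAtom μ P α n h i := fun i hi => (Finset.mem_filter.1 hi).2
    set lo : ℝ := (2 : ℝ) ^ (-(n : ℝ) * (h + α)) with hlo_def
    set hi' : ℝ := (2 : ℝ) ^ (-(n : ℝ) * (h - α)) with hhi_def
    set δ₁ : ℝ := Gs.inf' hGne (fun i => min (p i - lo) (hi' - p i)) with hδ₁_def
    have hδ₁ : 0 < δ₁ := by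
      rw [hδ₁_def, Finset.lt_inf'_iff]
      intro i hig
      have hg := hgoodGs i hig
      unfold GoodAtom at hg
      exact lt_min (by linarith [hg.1]) (by linarith [hg.2])
    set ε₀ : ℝ := (∑ i ∈ Gs, p i) - (1 - α) with hε₀_def
    have hε₀ : 0 < ε₀ := by rw [hε₀_def]; linarith
    set δ : ℝ := min δ₁ (ε₀ / (l + 1)) with hδ_def
    have hδ : 0 < δ := lt_min hδ₁ (div_pos hε₀ (by positivity))
    refine ⟨β * δ ^ 2 / 4, by positivity, fun FF hent => ?_⟩
    have hF := FF.2
    set γ : ℝ := β * δ ^ 2 / 4 with hγ_def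
    -- the conditional expectation functions and kernel functions
    set f : Fin l → X → ℝ := fun i => μ[(P i).indicator (fun _ => (1 : ℝ)) | FF.1] with hf_def
    set g : Fin l → X → ℝ := fun i z => (condExpKernel (mΩ := mX) μ FF.1 z (P i)).toReal
      with hg_def
    have hlog2 : (0 : ℝ) < Real.log 2 := Real.log_pos (by norm_num)
    have hlog2le : Real.log 2 ≤ 1 := by
      nlinarith [Real.log_le_sub_one_of_pos (by norm_num : (0:ℝ) < 2)]
    -- gap estimates
    set gap : Fin l → ℝ := fun i => (-(p i * Real.logb 2 (p i))) -
      ∫ x, -(f i x * Real.logb 2 (f i x)) ∂μ with hgap_def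
    have hgap_i : ∀ i, ∫ x, (f i x - p i) ^ 2 ∂μ ≤ 2 * Real.log 2 * gap i := fun i =>
      atom_gap μ FF.1 hF (hmeas i)
    have hsq_nonneg : ∀ i, 0 ≤ ∫ x, (f i x - p i) ^ 2 ∂μ := fun i =>
      integral_nonneg fun x => sq_nonneg _
    have hgap_nonneg : ∀ i, 0 ≤ gap i := fun i => by nlinarith [hgap_i i, hsq_nonneg i]
    have hsum_gap : ∑ i, gap i < γ := by
      have h1 : entropyH (mX := mX) μ P = ∑ i, -(p i * Real.logb 2 (p i)) := by
        rw [entropyH, Finset.sum_neg_distrib]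
      have h2 : condEntropyAlg (mX := mX) μ FF.1 P
          = ∑ i, ∫ x, -(f i x * Real.logb 2 (f i x)) ∂μ := rfl
      rw [hgap_def, Finset.sum_sub_distrib, ← h1, ← h2]
      linarith
    have hsq_sum : ∑ i ∈ Gs, ∫ x, (f i x - p i) ^ 2 ∂μ ≤ 2 * Real.log 2 * γ := by
      calc ∑ i ∈ Gs, ∫ x, (f i x - p i) ^ 2 ∂μ
          ≤ ∑ i ∈ Gs, 2 * Real.log 2 * gap i := Finset.sum_le_sum fun i _ => hgap_i i
        _ = 2 * Real.log 2 * ∑ i ∈ Gs, gap i := by rw [Finset.mul_sum]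
        _ ≤ 2 * Real.log 2 * ∑ i, gap i := by
            have := Finset.sum_le_sum_of_subset_of_nonneg (Finset.subset_univ Gs)
              (fun i _ _ => hgap_nonneg i)
            nlinarith
        _ ≤ 2 * Real.log 2 * γ := by nlinarith [hsum_gap]
    -- kernel versions
    have hg_meas : ∀ i, Measurable[mX] (g i) := fun i => by
      rw [hg_def]
      exact ((measurable_condExpKernel (μ := μ) (m := FF.1) (hmeas i)).mono hF le_rfl).ennreal_toReal
    have hg01 : ∀ i z, 0 ≤ g i z ∧ g i z ≤ 1 := fun i z => by
      constructor
      · exact ENNReal.toReal_nonneg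
      · have h1 : condExpKernel (mΩ := mX) μ FF.1 z (P i) ≤ 1 :=
          prob_le_one (μ := condExpKernel (mΩ := mX) μ FF.1 z)
        simpa using ENNReal.toReal_mono ENNReal.one_ne_top h1
    have hgf : ∀ i, g i =ᵐ[μ] f i := fun i =>
      condExpKernel_ae_eq_condExp hF (hmeas i)
    have hgsq_int : ∀ i, Integrable (fun z => (g i z - p i) ^ 2) μ := fun i => by
      refine Integrable.mono' (integrable_const 1)
        (((hg_meas i).sub_const _).pow_const 2).aestronglyMeasurable ?_
      refine Filter.Eventually.of_forall fun z => ?_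
      rw [Real.norm_eq_abs, abs_of_nonneg (sq_nonneg _)]
      have h1 := (hg01 i z).1
      have h2 := (hg01 i z).2
      have hp0 : 0 ≤ p i := ENNReal.toReal_nonneg
      have hp1 : p i ≤ 1 := by
        simpa [hp_def] using ENNReal.toReal_mono ENNReal.one_ne_top (prob_le_one (μ := μ) (s := P i))
      nlinarith
    set S : X → ℝ := fun z => ∑ i ∈ Gs, (g i z - p i) ^ 2 with hS_def
    have hS_int : Integrable S μ := integrable_finset_sum Gs fun i _ => hgsq_int i
    have hS_nonneg : 0 ≤ᵐ[μ] S :=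
      Filter.Eventually.of_forall fun z => Finset.sum_nonneg fun i _ => sq_nonneg _
    have hintS : ∫ z, S z ∂μ ≤ 2 * Real.log 2 * γ := by
      rw [hS_def]
      rw [integral_finset_sum Gs fun i _ => hgsq_int i]
      refine le_trans (le_of_eq (Finset.sum_congr rfl fun i _ => ?_)) hsq_sum
      refine integral_congr_ae ?_
      filter_upwards [hgf i] with x hx
      rw [hx]
    have cheb := mul_meas_ge_le_integral_of_nonneg hS_nonneg hS_int (δ ^ 2)
    set Z : Set X := {z | ∀ i ∈ Gs, |g i z - p i| < δ} with hZ_def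
    have hZmeas : MeasurableSet[mX] Z := by
      have hZeq : Z = ⋂ i, ⋂ (_ : i ∈ Gs), {z | |g i z - p i| < δ} := by
        ext z; simp [hZ_def]
      rw [hZeq]
      exact MeasurableSet.iInter fun i => MeasurableSet.iInter fun _ =>
        measurableSet_lt (((hg_meas i).sub_const _).abs) measurable_const
    have hcompl : Zᶜ ⊆ {z | δ ^ 2 ≤ S z} := by
      intro z hz
      simp only [hZ_def, Set.mem_compl_iff, Set.mem_setOf_eq] at hz
      push_neg at hz
      obtain ⟨i, hiG, hile⟩ := hz
      have h1 : δ ^ 2 ≤ (g i z - p i) ^ 2 := by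
        calc δ ^ 2 ≤ |g i z - p i| ^ 2 := pow_le_pow_left₀ hδ.le hile 2
          _ = (g i z - p i) ^ 2 := sq_abs _
      refine le_trans h1 ?_
      exact Finset.single_le_sum (f := fun j => (g j z - p j) ^ 2)
        (fun j _ => sq_nonneg _) hiG
    have hμZc : (μ Zᶜ).toReal ≤ β := by
      have h2 : (μ Zᶜ).toReal ≤ (μ {z | δ ^ 2 ≤ S z}).toReal :=
        ENNReal.toReal_mono (measure_ne_top _ _) (measure_mono hcompl)
      have h3 : δ ^ 2 * (μ {z | δ ^ 2 ≤ S z}).toReal ≤ 2 * Real.log 2 * γ :=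
        le_trans cheb hintS
      have h4 : (0:ℝ) < δ ^ 2 := by positivity
      have h5 : (0:ℝ) ≤ (μ Zᶜ).toReal := ENNReal.toReal_nonneg
      rw [hγ_def] at h3
      have h6 : δ ^ 2 * (μ Zᶜ).toReal ≤ δ ^ 2 * (μ {z | δ ^ 2 ≤ S z}).toReal :=
        mul_le_mul_of_nonneg_left h2 h4.le
      have h7 : 2 * Real.log 2 * (β * δ ^ 2 / 4) ≤ β * δ ^ 2 / 2 := by
        nlinarith [mul_pos hβ h4]
      nlinarith [h6, h3, h7, h4, h5, hβ, mul_pos hβ h4]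
    have hμZ : ENNReal.ofReal (1 - β) ≤ μ Z := by
      by_cases hβ1 : 1 < β
      · rw [ENNReal.ofReal_eq_zero.2 (by linarith)]
        exact zero_le
      · push_neg at hβ1
        have hZc_le : μ Zᶜ ≤ ENNReal.ofReal β :=
          (ENNReal.le_ofReal_iff_toReal_le (measure_ne_top _ _) hβ.le).2 hμZc
        have hsum1 : μ Z + μ Zᶜ = 1 := by
          rw [measure_add_measure_compl hZmeas, measure_univ]
        have h1 : (1 : ℝ≥0∞) - ENNReal.ofReal β ≤ μ Z := by
          rw [tsub_le_iff_right]
          calc (1 : ℝ≥0∞) = μ Z + μ Zᶜ := hsum1.symm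
            _ ≤ μ Z + ENNReal.ofReal β := add_le_add le_rfl hZc_le
        refine le_trans ?_ h1
        rw [ENNReal.ofReal_sub 1 hβ.le, ENNReal.ofReal_one]
    refine ⟨Z, hZmeas, hμZ, ?_⟩
    intro z hz
    have hzz : ∀ i ∈ Gs, |g i z - p i| < δ := hz
    have hsame : ∀ i, GoodAtom μ P α n h i →
        GoodAtom (condExpKernel (mΩ := mX) μ FF.1 z) P α n h i := by
      intro i hgood
      have hiG : i ∈ Gs := Finset.mem_filter.2 ⟨Finset.mem_univ i, hgood⟩
      have habs := hzz i hiG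
      rw [abs_lt] at habs
      have h1 : δ₁ ≤ min (p i - lo) (hi' - p i) := Finset.inf'_le _ hiG
      have h2 : δ ≤ δ₁ := min_le_left _ _
      have h3 : δ₁ ≤ p i - lo := le_trans h1 (min_le_left _ _)
      have h4 : δ₁ ≤ hi' - p i := le_trans h1 (min_le_right _ _)
      unfold GoodAtom
      rw [← hlo_def, ← hhi_def]
      have hgz : (condExpKernel (mΩ := mX) μ FF.1 z (P i)).toReal = g i z := rfl
      rw [hgz]
      constructor <;> linarith
    have hthird : 1 - α < ∑ i ∈ Gs, g i z := by
      have hsum2 : ∑ i ∈ Gs, (p i - δ) < ∑ i ∈ Gs, g i z :=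
        Finset.sum_lt_sum_of_nonempty hGne fun i hig => by
          have := hzz i hig; rw [abs_lt] at this; linarith [this.1]
      have hsum3 : ∑ i ∈ Gs, (p i - δ) = (∑ i ∈ Gs, p i) - Gs.card * δ := by
        rw [Finset.sum_sub_distrib, Finset.sum_const, nsmul_eq_mul]
      have hcard : (Gs.card : ℝ) ≤ l := by
        have h9 : Gs.card ≤ l := by
          simpa using Finset.card_le_univ Gs
        exact_mod_cast h9
      have hδ2 : δ ≤ ε₀ / (l + 1) := min_le_right _ _
      have hl1 : (0:ℝ) < (l : ℝ) + 1 := by positivity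
      have h6 : (Gs.card : ℝ) * δ < ε₀ := by
        have h7 : (Gs.card : ℝ) * δ ≤ (l : ℝ) * (ε₀ / (l + 1)) := by
          apply mul_le_mul hcard hδ2 hδ.le (by positivity)
        have h8 : (l : ℝ) * (ε₀ / (l + 1)) < ε₀ := by
          rw [mul_div_assoc']
          rw [div_lt_iff₀ hl1]
          nlinarith
        linarith
      rw [hε₀_def] at h6
      linarith [hsum2, hsum3.symm.le]
    refine ⟨?_, hsame, ?_⟩
    · show 1 - α < ∑ i ∈ Finset.univ.filter (GoodAtom (condExpKernel (mΩ := mX) μ FF.1 z) P α n h),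
        (condExpKernel (mΩ := mX) μ FF.1 z (P i)).toReal
      have hsub : Gs ⊆ Finset.univ.filter (GoodAtom (condExpKernel (mΩ := mX) μ FF.1 z) P α n h) := by
        intro i hiG
        exact Finset.mem_filter.2 ⟨Finset.mem_univ i, hsame i (hgoodGs i hiG)⟩
      refine lt_of_lt_of_le hthird ?_
      exact Finset.sum_le_sum_of_subset_of_nonneg hsub fun i _ _ => ENNReal.toReal_nonneg
    · show 1 - α < ∑ i ∈ Finset.univ.filter (GoodAtom μ P α n h),
        (condExpKernel (mΩ := mX) μ FF.1 z (P i)).toReal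
      rw [← hGs_def]
      exact hthird

/-- **Fact 2 of the paper.** Suppose `P` is `μ`-roughly equal with parameters `α, n, h`. Then
for every `β > 0` there is `γ > 0` such that whenever a sub-σ-algebra `𝔉` satisfies
`H_μ(P|𝔉) > H_μ(P) - γ`, then for the disintegration measures `μ_z` of `μ` over `𝔉` of `z` in
a set of measure at least `1 - β`, the partition `P` is `μ_z`-roughly equal with the same
parameters `α, n, h` and with the same good atoms. -/
theorem roughlyEqual_of_almostIndependent {X : Type*} [mX : MeasurableSpace X]
    [StandardBorelSpace X] (μ : Measure X) [IsProbabilityMeasure μ]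
    {l : ℕ} (P : Fin l → Set X) (hPpart : IsPartition P)
    (α h : ℝ) (n : ℕ) (hα : 0 < α) (hh : 0 < h)
    (hP : RoughlyEqual μ P α n h)
    (β : ℝ) (hβ : 0 < β) :
    ∃ γ : ℝ, 0 < γ ∧ ∀ F : MeasurableSpace X, F ≤ mX →
      condEntropyAlg (mX := mX) μ F P > entropyH (mX := mX) μ P - γ →
      ∃ Z : Set X, MeasurableSet[mX] Z ∧ ENNReal.ofReal (1 - β) ≤ μ Z ∧
        ∀ z ∈ Z, RoughlyEqualSameGood (mX := mX) μ
          (condExpKernel (mΩ := mX) μ F z) P α n h := by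
  obtain ⟨γ, hγ, H⟩ := main_helper μ P hPpart.meas α h n hα hh hP β hβ
  exact ⟨γ, hγ, fun F hF hent => H ⟨F, hF⟩ hent⟩
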